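/- The function Ψ_n(u) = A_n(sin(√λ_n u) + √λ_n cos(√λ_n u)), where λ_n > 0 satisfies sin(√λ_n)(λ_n − 1) = 2√λ_n cos(√λ_n), satisfies for every k ≥ 0: the (2k+1)-th derivative at 0 equals the (2k)-th derivative at 0, and the (2k+1)-th derivative at 1 equals minus the (2k)-th derivative at 1. In other words, Ψ_n belongs to the test function space 𝒮. -/

import Mathlib

lemma efbts_aux (lam A : ℝ) (hlam : 0 < lam) :
    ∀ k : ℕ,
      (iteratedDeriv (2 * k) (fun u => A * (Real.sin (Real.sqrt lam * u)
        + Real.sqrt lam * Real.cos (Real.sqrt lam * u)))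
        = fun u => (-lam)^k * (A * (Real.sin (Real.sqrt lam * u)
        + Real.sqrt lam * Real.cos (Real.sqrt lam * u)))) ∧
      (iteratedDeriv (2 * k + 1) (fun u => A * (Real.sin (Real.sqrt lam * u)
        + Real.sqrt lam * Real.cos (Real.sqrt lam * u)))
        = fun u => (-lam)^k * (A * (Real.sqrt lam * Real.cos (Real.sqrt lam * u)
        - lam * Real.sin (Real.sqrt lam * u)))) := by
  set s := Real.sqrt lam with hs
  have hss : s * s = lam := Real.mul_self_sqrt hlam.le
  have hlin : ∀ u : ℝ, HasDerivAt (fun u : ℝ => s * u) s u := by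
    intro u
    simpa using (hasDerivAt_id u).const_mul s
  have hΨ : ∀ u : ℝ, HasDerivAt (fun u => A * (Real.sin (s * u) + s * Real.cos (s * u)))
      (A * (s * Real.cos (s * u) - lam * Real.sin (s * u))) u := by
    intro u
    have h1 : HasDerivAt (fun u : ℝ => Real.sin (s * u)) (Real.cos (s * u) * s) u :=
      (Real.hasDerivAt_sin (s * u)).comp u (hlin u)
    have h2 : HasDerivAt (fun u : ℝ => Real.cos (s * u)) (-Real.sin (s * u) * s) u :=
      (Real.hasDerivAt_cos (s * u)).comp u (hlin u)
    have : HasDerivAt (fun u => A * (Real.sin (s * u) + s * Real.cos (s * u)))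
        (A * (Real.cos (s * u) * s + s * (-Real.sin (s * u) * s))) u :=
      ((h1.add (h2.const_mul s)).const_mul A)
    convert this using 1
    linear_combination (A * Real.sin (s * u)) * hss
  have hG : ∀ u : ℝ, HasDerivAt (fun u => A * (s * Real.cos (s * u) - lam * Real.sin (s * u)))
      (-lam * (A * (Real.sin (s * u) + s * Real.cos (s * u)))) u := by
    intro u
    have h1 : HasDerivAt (fun u : ℝ => Real.sin (s * u)) (Real.cos (s * u) * s) u :=
      (Real.hasDerivAt_sin (s * u)).comp u (hlin u)
    have h2 : HasDerivAt (fun u : ℝ => Real.cos (s * u)) (-Real.sin (s * u) * s) u :=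
      (Real.hasDerivAt_cos (s * u)).comp u (hlin u)
    have : HasDerivAt (fun u => A * (s * Real.cos (s * u) - lam * Real.sin (s * u)))
        (A * (s * (-Real.sin (s * u) * s) - lam * (Real.cos (s * u) * s))) u :=
      (((h2.const_mul s).sub (h1.const_mul lam)).const_mul A)
    convert this using 1
    linear_combination (A * Real.sin (s * u)) * hss
  intro k
  induction k with
  | zero =>
    constructor
    · simp
    · simp only [Nat.mul_zero, Nat.zero_add, iteratedDeriv_one, pow_zero, one_mul]
      funext u
      exact (hΨ u).deriv
  | succ k ih =>
    obtain ⟨ih1, ih2⟩ := ih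
    have e1 : 2 * (k + 1) = (2 * k + 1) + 1 := by ring
    have step1 : iteratedDeriv (2 * (k + 1)) (fun u => A * (Real.sin (s * u) + s * Real.cos (s * u)))
        = fun u => (-lam)^(k+1) * (A * (Real.sin (s * u) + s * Real.cos (s * u))) := by
      rw [e1, iteratedDeriv_succ, ih2]
      funext u
      have := ((hG u).const_mul ((-lam)^k)).deriv
      rw [this]
      ring
    refine ⟨step1, ?_⟩
    rw [iteratedDeriv_succ, step1]
    funext u
    have := ((hΨ u).const_mul ((-lam)^(k+1))).deriv
    rw [this]

/-- The eigenfunctions Ψ_n(u) = A(sin(√λ u) + √λ cos(√λ u)), with λ > 0 solving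
sin(√λ)(λ−1) = 2√λ cos(√λ), belong to the test function space 𝒮: for all k ≥ 0,
Ψ^{(2k+1)}(0) = Ψ^{(2k)}(0) and Ψ^{(2k+1)}(1) = -Ψ^{(2k)}(1). -/
theorem eigenfunctions_belong_to_test_space
    (lam A : ℝ) (hlam : 0 < lam)
    (heq : Real.sin (Real.sqrt lam) * (lam - 1)
        = 2 * Real.sqrt lam * Real.cos (Real.sqrt lam)) :
    let Ψ : ℝ → ℝ := fun u => A * (Real.sin (Real.sqrt lam * u)
        + Real.sqrt lam * Real.cos (Real.sqrt lam * u))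
    ∀ k : ℕ,
      iteratedDeriv (2 * k + 1) Ψ 0 = iteratedDeriv (2 * k) Ψ 0 ∧
      iteratedDeriv (2 * k + 1) Ψ 1 = - iteratedDeriv (2 * k) Ψ 1 := by
  intro Ψ k
  obtain ⟨h1, h2⟩ := efbts_aux lam A hlam k
  show iteratedDeriv (2 * k + 1) (fun u => A * (Real.sin (Real.sqrt lam * u)
        + Real.sqrt lam * Real.cos (Real.sqrt lam * u))) 0 = _ ∧ _
  rw [congrFun h1 (0:ℝ), congrFun h2 (0:ℝ), congrFun h1 (1:ℝ), congrFun h2 (1:ℝ)]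
  constructor
  · simp
  · simp only [mul_one]
    linear_combination (-((-lam)^k * A)) * heq
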